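/- Let $D \ge 2$ and $\sigma_b^2, \sigma_e^2 > 0$. Define the $(2D-1) \times (2D-1)$ block matrices $M_1 = \begin{pmatrix} A & B^T & B^T \\ B & C & E \\ B & E & C \end{pmatrix}$ and $M_2 = \begin{pmatrix} F & G^T & G^T \\ G & H & 0 \\ G & 0 & H \end{pmatrix}$, where $A = \frac{D}{\sigma_e^2 + D\sigma_b^2}$, $B$ is the $(D-1)$-vector with all entries $\frac{1}{\sigma_e^2 + D\sigma_b^2}$, $C$ is the $(D-1)\times(D-1)$ matrix with entries $C_{pq} = \frac{(\sigma_e^2 + D\sigma_b^2)\delta_{pq} - \sigma_b^2}{\sigma_e^2(\sigma_e^2 + D\sigma_b^2)}$, $E$ is the $(D-1)\times(D-1)$ matrix with all entries $\frac{1}{D(\sigma_e^2 + D\sigma_b^2)}$, $F = \sigma_b^2 + \frac{2D-1}{D}\sigma_e^2$, $G$ is the $(D-1)$-vector with all entries $-\sigma_e^2$, and $H$ is the $(D-1)\times(D-1)$ matrix with entries $H_{pq} = \sigma_e^2(1+\delta_{pq})$. Then $M_1 M_2 = I_{2D-1}$. -/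
import Mathlib


/-- The block matrix `M₁` (the per-patient information matrix summed over a balanced
complete-block design) times the proposed covariance block matrix `M₂` is the identity. -/
theorem block_inverse_identity (D : ℕ) (hD : 2 ≤ D) (sb2 se2 : ℝ)
    (hsb : 0 < sb2) (hse : 0 < se2) :
    let A : ℝ := (D : ℝ) / (se2 + (D : ℝ) * sb2)
    let Bval : ℝ := 1 / (se2 + (D : ℝ) * sb2)
    let Cent : Fin (D - 1) → Fin (D - 1) → ℝ := fun p q =>
      ((se2 + (D : ℝ) * sb2) * (if p = q then 1 else 0) - sb2) /
        (se2 * (se2 + (D : ℝ) * sb2))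
    let Eval : ℝ := 1 / ((D : ℝ) * (se2 + (D : ℝ) * sb2))
    let F : ℝ := sb2 + (2 * (D : ℝ) - 1) / (D : ℝ) * se2
    let Gval : ℝ := -se2
    let Hent : Fin (D - 1) → Fin (D - 1) → ℝ := fun p q =>
      se2 * (1 + (if p = q then 1 else 0))
    let M1 : Matrix (Fin 1 ⊕ (Fin (D - 1) ⊕ Fin (D - 1)))
        (Fin 1 ⊕ (Fin (D - 1) ⊕ Fin (D - 1))) ℝ :=
      Matrix.of fun i j =>
        match i, j with
        | Sum.inl _, Sum.inl _ => A
        | Sum.inl _, Sum.inr _ => Bval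
        | Sum.inr _, Sum.inl _ => Bval
        | Sum.inr (Sum.inl p), Sum.inr (Sum.inl q) => Cent p q
        | Sum.inr (Sum.inl _), Sum.inr (Sum.inr _) => Eval
        | Sum.inr (Sum.inr _), Sum.inr (Sum.inl _) => Eval
        | Sum.inr (Sum.inr p), Sum.inr (Sum.inr q) => Cent p q
    let M2 : Matrix (Fin 1 ⊕ (Fin (D - 1) ⊕ Fin (D - 1)))
        (Fin 1 ⊕ (Fin (D - 1) ⊕ Fin (D - 1))) ℝ :=
      Matrix.of fun i j =>
        match i, j with
        | Sum.inl _, Sum.inl _ => F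
        | Sum.inl _, Sum.inr _ => Gval
        | Sum.inr _, Sum.inl _ => Gval
        | Sum.inr (Sum.inl p), Sum.inr (Sum.inl q) => Hent p q
        | Sum.inr (Sum.inl _), Sum.inr (Sum.inr _) => 0
        | Sum.inr (Sum.inr _), Sum.inr (Sum.inl _) => 0
        | Sum.inr (Sum.inr p), Sum.inr (Sum.inr q) => Hent p q
    M1 * M2 = 1 := by
  intro A Bval Cent Eval F Gval Hent M1 M2
  have hs : se2 + (D:ℝ)*sb2 ≠ 0 := by positivity
  have hse' : se2 ≠ 0 := ne_of_gt hse
  have hDpos : (0:ℝ) < (D:ℝ) := by exact_mod_cast (by omega : 0 < D)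
  have hD0 : (D:ℝ) ≠ 0 := ne_of_gt hDpos
  have hcard : ((D-1:ℕ):ℝ) = (D:ℝ) - 1 := by
    have h1 : (1:ℕ) ≤ D := by omega
    push_cast [Nat.cast_sub h1]; ring
  have hH : ∀ q : Fin (D-1), ∑ x, Hent x q = se2 * D := by
    intro q
    simp only [Hent, mul_add, mul_one, mul_ite, mul_zero, Finset.sum_add_distrib,
      Finset.sum_const, Finset.card_univ, Fintype.card_fin, nsmul_eq_mul,
      Finset.sum_ite_eq, Finset.sum_ite_eq', Finset.mem_univ, if_true, hcard]
    ring
  have hC : ∀ p : Fin (D-1), ∑ r, Cent p r = (se2 + sb2)/(se2*(se2+(D:ℝ)*sb2)) := by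
    intro p
    simp only [Cent, sub_div, Finset.sum_sub_distrib, Finset.sum_const, Finset.card_univ,
      Fintype.card_fin, nsmul_eq_mul, hcard, mul_ite, mul_one, mul_zero, ite_div,
      zero_div, Finset.sum_ite_eq, Finset.sum_ite_eq', Finset.mem_univ, if_true]
    field_simp
    ring
  have hCH : ∀ p q : Fin (D-1), ∑ r, Cent p r * Hent r q
      = 1 + (if p = q then (1:ℝ) else 0) - (D:ℝ)*sb2/(se2+(D:ℝ)*sb2) := by
    intro p q
    have : ∀ r : Fin (D-1), Cent p r * Hent r q
        = ((if p = r then (1:ℝ) else 0) * (1 + if r = q then (1:ℝ) else 0)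
            - sb2/(se2+(D:ℝ)*sb2) - sb2/(se2+(D:ℝ)*sb2) * (if r = q then (1:ℝ) else 0)) := by
      intro r
      simp only [Cent, Hent]
      split_ifs <;> field_simp <;> ring
    rw [Finset.sum_congr rfl (fun r _ => this r)]
    simp only [mul_add, mul_one, ite_mul, one_mul, zero_mul, mul_ite, mul_zero,
      Finset.sum_sub_distrib, Finset.sum_add_distrib, Finset.sum_const, Finset.card_univ,
      Fintype.card_fin, nsmul_eq_mul, hcard, Finset.sum_ite_eq, Finset.sum_ite_eq',
      Finset.mem_univ, if_true]
    field_simp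
    try ring
  ext i j
  rcases i with i | p | p <;> rcases j with j | q | q <;>
    simp only [Matrix.mul_apply, Fintype.sum_sum_type, Matrix.of_apply, M1, M2,
      Matrix.one_apply, Finset.univ_unique, Finset.sum_singleton, Fintype.card_sum,
      Finset.sum_const, Finset.card_univ, Fintype.card_fin, nsmul_eq_mul,
      ← Finset.mul_sum, ← Finset.sum_mul, hH, hC, hCH, Sum.inr.injEq, Sum.inl.injEq,
      Finset.card_singleton, Nat.cast_one, Nat.cast_add, one_mul, mul_zero, add_zero,
      zero_add, hcard, eq_iff_true_of_subsingleton, reduceCtorEq, if_true, if_false] <;>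
    simp only [A, Bval, Cent, Eval, F, Gval, Hent] <;>
    (try split_ifs) <;> field_simp <;> ring
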